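/- Let N ≥ 1 and let Z be an N²-dimensional standard Gaussian vector with S = Σ_{k=1}^{N²} Z_k, and let c ~ N(0,1) be independent of Z. Define subpixels X_k = c/N² + (1/N)(Z_k - S/N²). Then the vector (X_1, ..., X_{N²}) is distributed as an N²-dimensional Gaussian with i.i.d. N(0, 1/N²) entries. -/

import Mathlib

open MeasureTheory ProbabilityTheory Finset Matrix
open scoped ENNReal

section Aux

lemma aux_lintegral_pi_prod : ∀ (n : ℕ) (f : Fin n → ℝ → ℝ≥0∞), (∀ i, Measurable (f i)) →
    ∫⁻ w, ∏ i, f i (w i) ∂(Measure.pi fun _ : Fin n => (volume : Measure ℝ))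
      = ∏ i, ∫⁻ x, f i x := by
  intro n
  induction n with
  | zero =>
      intro f hf
      simp [Measure.pi_of_empty (fun _ : Fin 0 => (volume : Measure ℝ))]
  | succ n ih =>
      intro f hf
      have h := (measurePreserving_piFinSuccAbove (fun _ : Fin (n+1) => (volume : Measure ℝ)) 0).symm
      have hmeas : Measurable fun w : Fin (n+1) → ℝ => ∏ i, f i (w i) :=
        Finset.measurable_prod _ fun i _ => (hf i).comp (measurable_pi_apply i)
      rw [← h.map_eq, lintegral_map hmeas (MeasurableEquiv.measurable _)]
      have h0 : ∀ p : ℝ × (Fin n → ℝ),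
          ((MeasurableEquiv.piFinSuccAbove (fun _ : Fin (n+1) => ℝ) 0).symm p) 0 = p.1 := by
        intro p; simp [MeasurableEquiv.piFinSuccAbove]
      have hs : ∀ (p : ℝ × (Fin n → ℝ)) (j : Fin n),
          ((MeasurableEquiv.piFinSuccAbove (fun _ : Fin (n+1) => ℝ) 0).symm p) j.succ = p.2 j := by
        intro p j
        have : j.succ = (0 : Fin (n+1)).succAbove j := by simp
        rw [this]
        simp [MeasurableEquiv.piFinSuccAbove]
      have hcomp : ∀ p : ℝ × (Fin n → ℝ),
          (∏ i, f i ((((MeasurableEquiv.piFinSuccAbove (fun _ : Fin (n+1) => ℝ) 0).symm) p) i))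
            = f 0 p.1 * ∏ j, f j.succ (p.2 j) := by
        intro p
        rw [Fin.prod_univ_succ, h0]
        exact congrArg _ (Finset.prod_congr rfl fun j _ => by rw [hs])
      simp_rw [hcomp]
      rw [lintegral_prod_mul (f := f 0) (g := fun v : Fin n → ℝ => ∏ j, f j.succ (v j))
        ((hf 0).aemeasurable)
        ((Finset.measurable_prod _ fun j _ => (hf j.succ).comp (measurable_pi_apply j)).aemeasurable)]
      rw [ih (fun j => f j.succ) (fun j => hf j.succ), Fin.prod_univ_succ]

lemma aux_pi_gaussian_withDensity (n : ℕ) :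
    Measure.pi (fun _ : Fin n => gaussianReal 0 1)
      = (Measure.pi fun _ : Fin n => (volume : Measure ℝ)).withDensity
          (fun w => ∏ i, gaussianPDF 0 1 (w i)) := by
  have hg : Measurable (gaussianPDF 0 1) := measurable_gaussianPDF 0 1
  refine Measure.pi_eq fun s hs => ?_
  rw [withDensity_apply _ (MeasurableSet.univ_pi hs),
    ← lintegral_indicator (MeasurableSet.univ_pi hs)]
  have hind : ∀ w : Fin n → ℝ,
      Set.indicator (Set.pi Set.univ s) (fun w => ∏ i, gaussianPDF 0 1 (w i)) w
        = ∏ i, Set.indicator (s i) (gaussianPDF 0 1) (w i) := by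
    intro w
    by_cases hw : w ∈ Set.pi Set.univ s
    · rw [Set.indicator_of_mem hw]
      exact Finset.prod_congr rfl fun i _ =>
        (Set.indicator_of_mem (hw i (Set.mem_univ i)) _).symm
    · rw [Set.indicator_of_notMem hw]
      have : ∃ i, w i ∉ s i := by
        by_contra hcon
        push_neg at hcon
        exact hw fun i _ => hcon i
      obtain ⟨i, hi⟩ := this
      exact (Finset.prod_eq_zero (Finset.mem_univ i)
        (Set.indicator_of_notMem hi _)).symm
  simp_rw [hind]
  rw [aux_lintegral_pi_prod n _ (fun i => hg.indicator (hs i))]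
  refine Finset.prod_congr rfl fun i _ => ?_
  rw [lintegral_indicator (hs i), gaussianReal_apply 0 one_ne_zero (s i)]

/-- The orthogonal matrix implementing the upsampling transformation. -/
noncomputable def auxM (N : ℕ) : Matrix (Fin (N ^ 2 + 1)) (Fin (N ^ 2 + 1)) ℝ :=
  Matrix.of fun i j =>
    Fin.cases
      (Fin.cases 0 (fun _ => (N : ℝ)⁻¹) j)
      (fun k => Fin.cases ((N : ℝ)⁻¹)
        (fun l => (if k = l then 1 else 0) - ((N : ℝ) ^ 2)⁻¹) j)
      i

lemma auxM_zero_zero (N : ℕ) : auxM N 0 0 = 0 := rfl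
lemma auxM_zero_succ (N : ℕ) (l : Fin (N ^ 2)) : auxM N 0 l.succ = (N : ℝ)⁻¹ := by
  simp [auxM]
lemma auxM_succ_zero (N : ℕ) (k : Fin (N ^ 2)) : auxM N k.succ 0 = (N : ℝ)⁻¹ := by
  simp [auxM]
lemma auxM_succ_succ (N : ℕ) (k l : Fin (N ^ 2)) :
    auxM N k.succ l.succ = (if k = l then 1 else 0) - ((N : ℝ) ^ 2)⁻¹ := by
  simp [auxM]

lemma auxM_orth (N : ℕ) (hN : 1 ≤ N) : auxM N * (auxM N)ᵀ = 1 := by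
  have hNne : (N : ℝ) ≠ 0 := Nat.cast_ne_zero.mpr (by omega)
  have hN2 : ((N : ℝ) ^ 2) ≠ 0 := pow_ne_zero _ hNne
  have hcard : ((N ^ 2 : ℕ) : ℝ) = (N : ℝ) ^ 2 := by push_cast; ring
  ext i j
  rw [Matrix.mul_apply, Matrix.one_apply]
  simp_rw [Matrix.transpose_apply]
  induction i using Fin.cases with
  | zero =>
      induction j using Fin.cases with
      | zero =>
          rw [Fin.sum_univ_succ]
          simp only [auxM_zero_zero, auxM_zero_succ, mul_zero, zero_add, if_pos rfl]
          rw [Finset.sum_const, Finset.card_univ, Fintype.card_fin, nsmul_eq_mul, hcard]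
          field_simp
          simp
      | succ k =>
          rw [Fin.sum_univ_succ]
          simp only [auxM_zero_zero, auxM_zero_succ, auxM_succ_zero, auxM_succ_succ,
            zero_mul, zero_add]
          rw [if_neg (Fin.succ_ne_zero k).symm]
          simp_rw [mul_sub, mul_ite, mul_one, mul_zero]
          rw [Finset.sum_sub_distrib, Finset.sum_ite_eq, if_pos (Finset.mem_univ k),
            Finset.sum_const, Finset.card_univ, Fintype.card_fin, nsmul_eq_mul, hcard]
          field_simp
          simp
  | succ k =>
      induction j using Fin.cases with
      | zero =>
          rw [Fin.sum_univ_succ]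
          simp only [auxM_zero_zero, auxM_zero_succ, auxM_succ_zero, auxM_succ_succ,
            mul_zero, zero_add]
          rw [if_neg (Fin.succ_ne_zero k)]
          simp_rw [sub_mul, ite_mul, one_mul, zero_mul]
          rw [Finset.sum_sub_distrib, Finset.sum_ite_eq, if_pos (Finset.mem_univ k),
            Finset.sum_const, Finset.card_univ, Fintype.card_fin, nsmul_eq_mul, hcard]
          field_simp
          simp
      | succ l =>
          rw [Fin.sum_univ_succ]
          simp only [auxM_succ_zero, auxM_succ_succ]
          rw [show ((if Fin.succ k = Fin.succ l then (1:ℝ) else 0))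
              = (if k = l then (1:ℝ) else 0) by simp [Fin.succ_inj]]
          have hexp : ∀ m : Fin (N ^ 2),
              ((if k = m then (1:ℝ) else 0) - ((N : ℝ) ^ 2)⁻¹)
                * ((if l = m then (1:ℝ) else 0) - ((N : ℝ) ^ 2)⁻¹)
              = (if k = m then (if l = m then (1:ℝ) else 0) else 0)
                - ((N : ℝ) ^ 2)⁻¹ * (if k = m then (1:ℝ) else 0)
                - ((N : ℝ) ^ 2)⁻¹ * (if l = m then (1:ℝ) else 0)
                + ((N : ℝ) ^ 2)⁻¹ * ((N : ℝ) ^ 2)⁻¹ := by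
            intro m
            by_cases h1 : k = m <;> by_cases h2 : l = m <;> simp [h1, h2] <;> ring
          simp_rw [hexp]
          rw [Finset.sum_add_distrib, Finset.sum_sub_distrib, Finset.sum_sub_distrib,
            Finset.sum_ite_eq, if_pos (Finset.mem_univ k)]
          simp_rw [mul_ite, mul_one, mul_zero]
          rw [Finset.sum_ite_eq, if_pos (Finset.mem_univ k),
            Finset.sum_ite_eq, if_pos (Finset.mem_univ l),
            Finset.sum_const, Finset.card_univ, Fintype.card_fin, nsmul_eq_mul, hcard]
          by_cases hkl : k = l
          · simp only [hkl, if_pos rfl]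
            field_simp
            ring
          · rw [if_neg hkl, if_neg (fun h => hkl h.symm)]
            field_simp
            ring

lemma aux_map_pi_gaussian_orth {n : ℕ} (M : Matrix (Fin n) (Fin n) ℝ)
    (hM : M * Mᵀ = 1) :
    (Measure.pi fun _ : Fin n => gaussianReal 0 1).map (fun w => M.mulVec w)
      = Measure.pi fun _ : Fin n => gaussianReal 0 1 := by
  classical
  -- determinant
  have hdet2 : M.det * M.det = 1 := by
    have := congrArg Matrix.det hM
    rwa [Matrix.det_mul, Matrix.det_transpose, Matrix.det_one] at this
  have hdet_ne : M.det ≠ 0 := by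
    intro h; rw [h, zero_mul] at hdet2; exact zero_ne_one hdet2
  have habs : |M.det| = 1 := by
    rcases mul_self_eq_one_iff.mp hdet2 with h | h <;> simp [h]
  -- measurability of mulVec
  have hT : Measurable fun w : Fin n → ℝ => M.mulVec w := by
    refine measurable_pi_lambda _ fun i => ?_
    simpa [Matrix.mulVec, dotProduct] using
      Finset.measurable_sum (Finset.univ : Finset (Fin n))
        (fun j _ => by fun_prop)
  -- norm preservation
  have hMtM : Mᵀ * M = 1 := mul_eq_one_comm.mp hM
  have hnorm : ∀ w : Fin n → ℝ, ∑ i, (M.mulVec w i)^2 = ∑ i, (w i)^2 := by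
    intro w
    have hdot : M.mulVec w ⬝ᵥ M.mulVec w = w ⬝ᵥ w := by
      rw [Matrix.dotProduct_mulVec, ← Matrix.mulVec_transpose, Matrix.mulVec_mulVec, hMtM,
        Matrix.one_mulVec]
    simpa [dotProduct, pow_two] using hdot
  -- invariance of the density
  have hGT : ∀ w : Fin n → ℝ,
      (∏ i, gaussianPDF 0 1 (M.mulVec w i)) = ∏ i, gaussianPDF 0 1 (w i) := by
    intro w
    have hkey : ∀ u : Fin n → ℝ, ∏ i, gaussianPDFReal 0 1 (u i)
        = (Real.sqrt (2 * Real.pi))⁻¹ ^ n * Real.exp (-(∑ i, (u i)^2) / 2) := by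
      intro u
      simp only [gaussianPDFReal, NNReal.coe_one, mul_one, sub_zero, Finset.prod_mul_distrib,
        Finset.prod_const, Finset.card_univ, Fintype.card_fin, ← Real.exp_sum]
      congr 1
      rw [← Finset.sum_div, Finset.sum_neg_distrib]
    simp only [gaussianPDF]
    rw [← ENNReal.ofReal_prod_of_nonneg (fun i _ => gaussianPDFReal_nonneg 0 1 _),
      ← ENNReal.ofReal_prod_of_nonneg (fun i _ => gaussianPDFReal_nonneg 0 1 _),
      hkey, hkey, hnorm]
  -- density measurability
  have hg : Measurable (gaussianPDF 0 1) := measurable_gaussianPDF 0 1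
  have hG : Measurable fun w : Fin n → ℝ => ∏ i, gaussianPDF 0 1 (w i) :=
    Finset.measurable_prod _ fun i _ => hg.comp (measurable_pi_apply i)
  -- volume is preserved
  have hvol : (Measure.pi fun _ : Fin n => (volume : Measure ℝ)).map (fun w => M.mulVec w)
      = Measure.pi fun _ : Fin n => (volume : Measure ℝ) := by
    have := Real.map_matrix_volume_pi_eq_smul_volume_pi (M := M) hdet_ne
    have heq : (Matrix.toLin' M : (Fin n → ℝ) → Fin n → ℝ) = fun w => M.mulVec w := by
      funext w; exact Matrix.toLin'_apply M w
    rw [heq] at this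
    rw [show (Measure.pi fun _ : Fin n => (volume : Measure ℝ)) = (volume : Measure (Fin n → ℝ))
        from (MeasureTheory.volume_pi).symm, this, abs_inv, habs]
    simp
  -- main computation
  rw [aux_pi_gaussian_withDensity n]
  ext A hA
  rw [Measure.map_apply hT hA, withDensity_apply _ (hT hA), withDensity_apply _ hA,
    ← lintegral_indicator (hT hA), ← lintegral_indicator hA]
  have hind : ∀ w : Fin n → ℝ,
      Set.indicator ((fun w => M.mulVec w) ⁻¹' A) (fun w => ∏ i, gaussianPDF 0 1 (w i)) w
        = Set.indicator A (fun w => ∏ i, gaussianPDF 0 1 (w i)) (M.mulVec w) := by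
    intro w
    by_cases hw : M.mulVec w ∈ A
    · rw [Set.indicator_of_mem hw, Set.indicator_of_mem (by exact hw), hGT]
    · rw [Set.indicator_of_notMem hw, Set.indicator_of_notMem (by exact hw)]
  simp_rw [hind]
  calc ∫⁻ w, Set.indicator A (fun w => ∏ i, gaussianPDF 0 1 (w i)) (M.mulVec w)
        ∂(Measure.pi fun _ : Fin n => (volume : Measure ℝ))
      = ∫⁻ y, Set.indicator A (fun w => ∏ i, gaussianPDF 0 1 (w i)) y
        ∂((Measure.pi fun _ : Fin n => (volume : Measure ℝ)).map (fun w => M.mulVec w)) := by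
        rw [lintegral_map (hG.indicator hA) hT]
    _ = ∫⁻ y, Set.indicator A (fun w => ∏ i, gaussianPDF 0 1 (w i)) y
        ∂(Measure.pi fun _ : Fin n => (volume : Measure ℝ)) := by rw [hvol]

lemma aux_pi_map_coord {n : ℕ} (φ : ℝ → ℝ) (hφ : Measurable φ)
    (κ : Measure ℝ) [IsProbabilityMeasure κ] :
    (Measure.pi fun _ : Fin n => κ).map (fun w (k : Fin n) => φ (w k))
      = Measure.pi fun _ : Fin n => κ.map φ := by
  haveI : IsProbabilityMeasure (κ.map φ) := Measure.isProbabilityMeasure_map hφ.aemeasurable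
  have hf : Measurable fun (w : Fin n → ℝ) (k : Fin n) => φ (w k) :=
    measurable_pi_lambda _ fun k => hφ.comp (measurable_pi_apply k)
  refine (Measure.pi_eq fun s hs => ?_).symm
  rw [Measure.map_apply hf (MeasurableSet.univ_pi hs)]
  have hpre : (fun (w : Fin n → ℝ) (k : Fin n) => φ (w k)) ⁻¹' Set.pi Set.univ s
      = Set.pi Set.univ fun k => φ ⁻¹' s k := by
    ext w
    simp [Set.mem_pi]
  rw [hpre, Measure.pi_pi]
  exact Finset.prod_congr rfl fun k _ => (Measure.map_apply hφ (hs k)).symm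

lemma aux_map_fun_eq_pi {Ω : Type*} [MeasurableSpace Ω] (μ : Measure Ω)
    [IsProbabilityMeasure μ] {n : ℕ} (Z : Fin n → Ω → ℝ) (hZmeas : ∀ k, Measurable (Z k))
    (hZindep : iIndepFun Z μ) :
    μ.map (fun ω (k : Fin n) => Z k ω) = Measure.pi (fun k => μ.map (Z k)) := by
  haveI : ∀ k, IsProbabilityMeasure (μ.map (Z k)) :=
    fun k => Measure.isProbabilityMeasure_map (hZmeas k).aemeasurable
  have hf : Measurable fun (ω : Ω) (k : Fin n) => Z k ω :=
    measurable_pi_lambda _ fun k => hZmeas k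
  refine (Measure.pi_eq fun s hs => ?_).symm
  rw [Measure.map_apply hf (MeasurableSet.univ_pi hs)]
  have hpre : (fun (ω : Ω) (k : Fin n) => Z k ω) ⁻¹' Set.pi Set.univ s
      = ⋂ k ∈ (Finset.univ : Finset (Fin n)), Z k ⁻¹' s k := by
    ext ω
    simp [Set.mem_pi]
  rw [hpre, hZindep.measure_inter_preimage_eq_mul Finset.univ (fun i _ => hs i)]
  exact Finset.prod_congr rfl fun k _ => (Measure.map_apply (hZmeas k) (hs k)).symm

end Aux

/-- For `N ≥ 1`, let `Z` be an `N²`-dimensional standard Gaussian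
vector with `S = Σ Z_k`, and `c ~ N(0,1)` independent of `Z`. Then the subpixels
`X_k = c/N² + (1/N)(Z_k - S/N²)` form an `N²`-dimensional Gaussian vector with
i.i.d. `N(0, 1/N²)` entries, i.e. the joint law is the product of `N²` copies of
`gaussianReal 0 (1/N²)`. -/
theorem upsampled_subpixels_are_white_noise
    {Ω : Type*} [MeasurableSpace Ω] (μ : Measure Ω) [IsProbabilityMeasure μ]
    (N : ℕ) (hN : 1 ≤ N)
    (Z : Fin (N ^ 2) → Ω → ℝ) (hZmeas : ∀ k, Measurable (Z k))
    (hZindep : iIndepFun Z μ)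
    (hZgauss : ∀ k, μ.map (Z k) = gaussianReal 0 1)
    (c : Ω → ℝ) (hcmeas : Measurable c) (hc : μ.map c = gaussianReal 0 1)
    (hcZ : IndepFun c (fun ω => fun k : Fin (N ^ 2) => Z k ω) μ)
    (X : Fin (N ^ 2) → Ω → ℝ)
    (hX : ∀ k ω, X k ω =
      c ω / (N ^ 2 : ℝ) + (1 / (N : ℝ)) * (Z k ω - (∑ j, Z j ω) / (N ^ 2 : ℝ))) :
    μ.map (fun ω => fun k : Fin (N ^ 2) => X k ω)
      = Measure.pi (fun _ : Fin (N ^ 2) =>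
          gaussianReal 0 ((1 / (N : ℝ) ^ 2).toNNReal)) := by
  have hNne : (N : ℝ) ≠ 0 := Nat.cast_ne_zero.mpr (by omega)
  have hN2ne : ((N : ℝ) ^ 2) ≠ 0 := pow_ne_zero _ hNne
  -- the measurable equivalence (Fin (N^2+1) → ℝ) ≃ᵐ ℝ × (Fin (N^2) → ℝ)
  set e := MeasurableEquiv.piFinSuccAbove (fun _ : Fin (N ^ 2 + 1) => ℝ) 0 with he
  have he_symm_zero : ∀ p : ℝ × (Fin (N ^ 2) → ℝ), e.symm p 0 = p.1 := by
    intro p; simp [he, MeasurableEquiv.piFinSuccAbove]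
  have he_symm_succ : ∀ (p : ℝ × (Fin (N ^ 2) → ℝ)) (j : Fin (N ^ 2)),
      e.symm p j.succ = p.2 j := by
    intro p j
    have hj : j.succ = (0 : Fin (N ^ 2 + 1)).succAbove j := by simp
    rw [hj]
    simp [he, MeasurableEquiv.piFinSuccAbove]
  -- joint law of (c, Z)
  have hZvec_meas : Measurable fun ω (k : Fin (N ^ 2)) => Z k ω :=
    measurable_pi_lambda _ hZmeas
  have hpair_meas : Measurable fun ω => (c ω, fun k : Fin (N ^ 2) => Z k ω) :=
    hcmeas.prodMk hZvec_meas
  have hZpi : μ.map (fun ω (k : Fin (N ^ 2)) => Z k ω)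
      = Measure.pi (fun _ : Fin (N ^ 2) => gaussianReal 0 1) := by
    rw [aux_map_fun_eq_pi μ Z hZmeas hZindep]
    exact congrArg Measure.pi (funext fun k => hZgauss k)
  have hpair : μ.map (fun ω => (c ω, fun k : Fin (N ^ 2) => Z k ω))
      = (gaussianReal 0 1).prod (Measure.pi fun _ : Fin (N ^ 2) => gaussianReal 0 1) := by
    rw [(indepFun_iff_map_prod_eq_prod_map_map hcmeas.aemeasurable
      hZvec_meas.aemeasurable).mp hcZ, hc, hZpi]
  -- the vector V
  have hV_meas : Measurable fun ω => e.symm (c ω, fun k : Fin (N ^ 2) => Z k ω) :=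
    e.symm.measurable.comp hpair_meas
  have hV : μ.map (fun ω => e.symm (c ω, fun k : Fin (N ^ 2) => Z k ω))
      = Measure.pi (fun _ : Fin (N ^ 2 + 1) => gaussianReal 0 1) := by
    have hmm : μ.map (fun ω => e.symm (c ω, fun k : Fin (N ^ 2) => Z k ω))
        = (μ.map (fun ω => (c ω, fun k : Fin (N ^ 2) => Z k ω))).map e.symm := by
      rw [Measure.map_map e.symm.measurable hpair_meas]
      rfl
    rw [hmm, hpair]
    exact ((measurePreserving_piFinSuccAbove
      (fun _ : Fin (N ^ 2 + 1) => gaussianReal 0 1) 0).symm e).map_eq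
  -- factor X through the matrix
  have hT_meas : Measurable fun w : Fin (N ^ 2 + 1) → ℝ => (auxM N).mulVec w := by
    refine measurable_pi_lambda _ fun i => ?_
    simpa [Matrix.mulVec, dotProduct] using
      Finset.measurable_sum (Finset.univ : Finset (Fin (N ^ 2 + 1)))
        (fun j _ => by fun_prop)
  have hg_meas : Measurable fun (w : Fin (N ^ 2 + 1) → ℝ) (k : Fin (N ^ 2)) =>
      (N : ℝ)⁻¹ * w k.succ :=
    measurable_pi_lambda _ fun k => (measurable_pi_apply k.succ).const_mul _
  have hfact : (fun ω (k : Fin (N ^ 2)) => X k ω)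
      = (fun (w : Fin (N ^ 2 + 1) → ℝ) (k : Fin (N ^ 2)) => (N : ℝ)⁻¹ * w k.succ)
        ∘ (fun w => (auxM N).mulVec w)
        ∘ (fun ω => e.symm (c ω, fun k : Fin (N ^ 2) => Z k ω)) := by
    funext ω k
    simp only [Function.comp_apply]
    have hrow : (auxM N).mulVec (e.symm (c ω, fun k : Fin (N ^ 2) => Z k ω)) k.succ
        = (N : ℝ)⁻¹ * c ω + (Z k ω - (∑ j, Z j ω) / (N : ℝ) ^ 2) := by
      rw [Matrix.mulVec, dotProduct, Fin.sum_univ_succ, he_symm_zero, auxM_succ_zero]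
      have : ∀ j : Fin (N ^ 2),
          auxM N k.succ j.succ * e.symm (c ω, fun k : Fin (N ^ 2) => Z k ω) j.succ
            = ((if k = j then (1:ℝ) else 0) - ((N : ℝ) ^ 2)⁻¹) * Z j ω := by
        intro j; rw [auxM_succ_succ, he_symm_succ]
      rw [Finset.sum_congr rfl fun j _ => this j]
      simp_rw [sub_mul, ite_mul, one_mul, zero_mul]
      rw [Finset.sum_sub_distrib, Finset.sum_ite_eq, if_pos (Finset.mem_univ k),
        ← Finset.mul_sum]
      rw [div_eq_mul_inv, mul_comm ((∑ j, Z j ω)) ((N:ℝ)^2)⁻¹]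
    rw [hrow, hX k ω]
    field_simp
  rw [hfact]
  have hmap1 : μ.map ((fun (w : Fin (N ^ 2 + 1) → ℝ) (k : Fin (N ^ 2)) => (N : ℝ)⁻¹ * w k.succ)
        ∘ (fun w => (auxM N).mulVec w)
        ∘ (fun ω => e.symm (c ω, fun k : Fin (N ^ 2) => Z k ω)))
      = ((Measure.pi (fun _ : Fin (N ^ 2 + 1) => gaussianReal 0 1)).map
          (fun w => (auxM N).mulVec w)).map
          (fun (w : Fin (N ^ 2 + 1) → ℝ) (k : Fin (N ^ 2)) => (N : ℝ)⁻¹ * w k.succ) := by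
    rw [← hV, Measure.map_map hT_meas hV_meas, Measure.map_map hg_meas (hT_meas.comp hV_meas)]
  rw [hmap1, aux_map_pi_gaussian_orth (auxM N) (auxM_orth N hN)]
  -- now drop the first coordinate and rescale
  have hdrop : (Measure.pi (fun _ : Fin (N ^ 2 + 1) => gaussianReal 0 1)).map
      (fun (w : Fin (N ^ 2 + 1) → ℝ) (k : Fin (N ^ 2)) => w k.succ)
      = Measure.pi (fun _ : Fin (N ^ 2) => gaussianReal 0 1) := by
    have hcomp : (fun (w : Fin (N ^ 2 + 1) → ℝ) (k : Fin (N ^ 2)) => w k.succ)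
        = Prod.snd ∘ e := by
      funext w
      funext k
      have : e w = (w 0, fun j : Fin (N ^ 2) => w ((0 : Fin (N ^ 2 + 1)).succAbove j)) := rfl
      simp [this]
    rw [hcomp, ← Measure.map_map measurable_snd e.measurable,
      (measurePreserving_piFinSuccAbove (fun _ : Fin (N ^ 2 + 1) => gaussianReal 0 1) 0).map_eq,
      Measure.map_snd_prod]
    simp
  have hsplit : (fun (w : Fin (N ^ 2 + 1) → ℝ) (k : Fin (N ^ 2)) => (N : ℝ)⁻¹ * w k.succ)
      = (fun (u : Fin (N ^ 2) → ℝ) (k : Fin (N ^ 2)) => (N : ℝ)⁻¹ * u k)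
        ∘ (fun (w : Fin (N ^ 2 + 1) → ℝ) (k : Fin (N ^ 2)) => w k.succ) := rfl
  have hdrop_meas : Measurable fun (w : Fin (N ^ 2 + 1) → ℝ) (k : Fin (N ^ 2)) => w k.succ :=
    measurable_pi_lambda _ fun k => measurable_pi_apply k.succ
  have hscale_meas : Measurable fun (u : Fin (N ^ 2) → ℝ) (k : Fin (N ^ 2)) =>
      (N : ℝ)⁻¹ * u k :=
    measurable_pi_lambda _ fun k => (measurable_pi_apply k).const_mul _
  rw [hsplit, ← Measure.map_map hscale_meas hdrop_meas, hdrop,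
    aux_pi_map_coord (fun x => (N : ℝ)⁻¹ * x) (measurable_id.const_mul _) (gaussianReal 0 1)]
  have hvar : (gaussianReal 0 1).map (fun x => (N : ℝ)⁻¹ * x)
      = gaussianReal 0 ((1 / (N : ℝ) ^ 2).toNNReal) := by
    have := gaussianReal_map_const_mul (μ := 0) (v := 1) ((N : ℝ)⁻¹)
    rw [show (fun x => (N : ℝ)⁻¹ * x) = ((N : ℝ)⁻¹ * ·) from rfl, this]
    norm_num
    congr 1
    ext
    rw [Real.coe_toNNReal _ (by positivity)]
    push_cast
    field_simp
  rw [hvar]
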